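/- Let Ω₁ ⊆ Ω₂ be convex domains in ℝ^d and u₁, u₂ concave solutions of the zero-curvature free boundary problem (each equal to h₀ on ∂Ω_i, with Monge–Ampère measure zero and free boundary gradient λ₀), given by the lower-envelope formula u_i = inf of support planes of slope λ₀ to ∂Ω̂_i. Then the convex hull of the free boundary of u₁ is contained in the convex hull of the free boundary of u₂: Hull({u₁ = 0} ∖ Ω₁) ⊆ Hull({u₂ = 0} ∖ Ω₂). -/

import Mathlib

open RealInnerProductSpace Set Metric

/-- The lower envelope, over all affine functions of gradient norm `λ₀` lying above
`h₀` on `Ω`, evaluated at `x`. -/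
noncomputable def env {d : ℕ} (h₀ lam₀ : ℝ) (Ω : Set (EuclideanSpace ℝ (Fin d)))
    (x : EuclideanSpace ℝ (Fin d)) : ℝ :=
  sInf {h : ℝ | ∃ (a : EuclideanSpace ℝ (Fin d)) (c : ℝ),
    ‖a‖ = lam₀ ∧ (∀ y ∈ Ω, h₀ ≤ ⟪a, y⟫ + c) ∧ h = ⟪a, x⟫ + c}

section aux

variable {d : ℕ} {h₀ lam₀ : ℝ} {Ω : Set (EuclideanSpace ℝ (Fin d))}
  {x : EuclideanSpace ℝ (Fin d)}

/-- The value set defining `env`. -/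
def envSet (h₀ lam₀ : ℝ) (Ω : Set (EuclideanSpace ℝ (Fin d)))
    (x : EuclideanSpace ℝ (Fin d)) : Set ℝ :=
  {h : ℝ | ∃ (a : EuclideanSpace ℝ (Fin d)) (c : ℝ),
    ‖a‖ = lam₀ ∧ (∀ y ∈ Ω, h₀ ≤ ⟪a, y⟫ + c) ∧ h = ⟪a, x⟫ + c}

lemma env_eq : env h₀ lam₀ Ω x = sInf (envSet h₀ lam₀ Ω x) := rfl

lemma elem_lower {h : ℝ} {y : EuclideanSpace ℝ (Fin d)} (hy : y ∈ Ω)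
    (hh : h ∈ envSet h₀ lam₀ Ω x) : h₀ - lam₀ * dist x y ≤ h := by
  obtain ⟨a, c, hna, hab, rfl⟩ := hh
  have h1 := hab y hy
  have h2 : ⟪a, x - y⟫ = ⟪a, x⟫ - ⟪a, y⟫ := inner_sub_right a x y
  have h3 : |⟪a, x - y⟫| ≤ ‖a‖ * ‖x - y‖ := abs_real_inner_le_norm a (x - y)
  have h4 := neg_abs_le ⟪a, x - y⟫
  rw [dist_eq_norm, ← hna]
  linarith

lemma envSet_bddBelow (hne : Ω.Nonempty) : BddBelow (envSet h₀ lam₀ Ω x) := by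
  obtain ⟨y₀, hy₀⟩ := hne
  exact ⟨h₀ - lam₀ * dist x y₀, fun h hh => elem_lower hy₀ hh⟩

lemma elem_lower_infDist {h : ℝ} (hlam₀ : 0 < lam₀) (hne : Ω.Nonempty)
    (hh : h ∈ envSet h₀ lam₀ Ω x) : h₀ - lam₀ * infDist x Ω ≤ h := by
  have key : (h₀ - h) / lam₀ ≤ infDist x Ω := by
    by_contra hc
    push_neg at hc
    obtain ⟨y, hy, hlt⟩ := (infDist_lt_iff hne).mp hc
    have := elem_lower hy hh
    have h2 : h₀ - h ≤ lam₀ * dist x y := by linarith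
    rw [lt_div_iff₀ hlam₀] at hlt
    nlinarith
  rw [div_le_iff₀ hlam₀] at key
  nlinarith [infDist_nonneg (x := x) (s := Ω)]

lemma envSet_nonempty (hd : 0 < d) (hlam₀ : 0 < lam₀)
    (hbdd : Bornology.IsBounded Ω) : (envSet h₀ lam₀ Ω x).Nonempty := by
  obtain ⟨R, hR⟩ := hbdd.subset_closedBall 0
  refine ⟨_, lam₀ • EuclideanSpace.single (⟨0, hd⟩ : Fin d) (1 : ℝ), h₀ + lam₀ * R, ?_, ?_, rfl⟩
  · rw [norm_smul, EuclideanSpace.norm_single]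
    simp [abs_of_pos hlam₀]
  · intro y hy
    have hyR : ‖y‖ ≤ R := by simpa [dist_zero_right] using hR hy
    set a := lam₀ • EuclideanSpace.single (⟨0, hd⟩ : Fin d) (1 : ℝ)
    have hna : ‖a‖ = lam₀ := by
      rw [norm_smul, EuclideanSpace.norm_single]; simp [abs_of_pos hlam₀]
    have h3 : |⟪a, y⟫| ≤ ‖a‖ * ‖y‖ := abs_real_inner_le_norm a y
    have h4 := neg_abs_le ⟪a, y⟫
    rw [hna] at h3
    nlinarith

/-- env lower bound -/
lemma env_ge (hlam₀ : 0 < lam₀) (hne : Ω.Nonempty)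
    (hS : (envSet h₀ lam₀ Ω x).Nonempty) :
    h₀ - lam₀ * infDist x Ω ≤ env h₀ lam₀ Ω x :=
  le_csInf hS fun _ hb => elem_lower_infDist hlam₀ hne hb

/-- supporting affine function through the projection -/
lemma mem_envSet_of_pos (hlam₀ : 0 < lam₀) (hconv : Convex ℝ Ω) (hne : Ω.Nonempty)
    (hpos : 0 < infDist x Ω) :
    (h₀ - lam₀ * infDist x Ω) ∈ envSet h₀ lam₀ Ω x := by
  obtain ⟨p, hpK, hpd⟩ := exists_mem_closure_infDist_eq_dist hne x
  set δ := dist x p with hδdef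
  have hδpos : 0 < δ := by rw [← hpd]; exact hpos
  have hproj : ∀ w ∈ closure Ω, ⟪x - p, w - p⟫ ≤ 0 := by
    have hKconv : Convex ℝ (closure Ω) := hconv.closure
    have hiInf : (⨅ w : closure Ω, ‖x - (w : EuclideanSpace ℝ (Fin d))‖)
        = infDist x (closure Ω) := by
      rw [infDist_eq_iInf]; simp_rw [dist_eq_norm]
    have heq : ‖x - p‖ = ⨅ w : closure Ω, ‖x - (w : EuclideanSpace ℝ (Fin d))‖ := by
      rw [hiInf, infDist_closure, hpd, hδdef]
      exact (dist_eq_norm x p).symm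
    exact (norm_eq_iInf_iff_real_inner_le_zero hKconv hpK).mp heq
  set s := lam₀ / δ with hsdef
  have hspos : 0 < s := div_pos hlam₀ hδpos
  set a : EuclideanSpace ℝ (Fin d) := -(s • (x - p)) with hadef
  have hnxp : ‖x - p‖ = δ := by rw [hδdef]; exact (dist_eq_norm x p).symm
  have hna : ‖a‖ = lam₀ := by
    rw [hadef, norm_neg, norm_smul, hnxp, Real.norm_eq_abs, abs_of_pos hspos, hsdef]
    field_simp
  have hinner : ∀ w : EuclideanSpace ℝ (Fin d), ⟪a, w⟫ = -(s * ⟪x - p, w⟫) := by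
    intro w
    rw [hadef, inner_neg_left, real_inner_smul_left]
  refine ⟨a, h₀ - ⟪a, p⟫, hna, ?_, ?_⟩
  · intro y hy
    have h1 : ⟪x - p, y - p⟫ ≤ 0 := hproj y (subset_closure hy)
    have h2 : ⟪a, y - p⟫ = ⟪a, y⟫ - ⟪a, p⟫ := inner_sub_right a y p
    have h3 : ⟪a, y - p⟫ = -(s * ⟪x - p, y - p⟫) := hinner (y - p)
    nlinarith
  · have h2 : ⟪a, x - p⟫ = ⟪a, x⟫ - ⟪a, p⟫ := inner_sub_right a x p
    have h3 : ⟪a, x - p⟫ = -(s * ⟪x - p, x - p⟫) := hinner (x - p)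
    have h4 : ⟪x - p, x - p⟫ = ‖x - p‖ ^ 2 := real_inner_self_eq_norm_sq (x - p)
    have h5 : s * δ ^ 2 = lam₀ * δ := by rw [hsdef]; field_simp
    have : infDist x Ω = δ := hpd
    rw [hnxp] at h4
    nlinarith

end aux

theorem free_boundary_monotone
    (d : ℕ) (h₀ lam₀ : ℝ) (hh₀ : 0 < h₀) (hlam₀ : 0 < lam₀)
    (Ω₁ Ω₂ : Set (EuclideanSpace ℝ (Fin d)))
    (h₁ne : Ω₁.Nonempty) (hconv₁ : Convex ℝ Ω₁) (hconv₂ : Convex ℝ Ω₂)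
    (hbdd₂ : Bornology.IsBounded Ω₂) (hsub : Ω₁ ⊆ Ω₂) :
    convexHull ℝ ({x | env h₀ lam₀ Ω₁ x = 0} \ Ω₁) ⊆
      convexHull ℝ ({x | env h₀ lam₀ Ω₂ x = 0} \ Ω₂) := by
  apply convexHull_min _ (convex_convexHull ℝ _)
  rintro x ⟨hx0, hxΩ⟩
  rcases Nat.eq_zero_or_pos d with hd0 | hd
  · exfalso
    obtain ⟨y₀, hy₀⟩ := h₁ne
    subst hd0
    have hxy : x = y₀ := PiLp.ext fun i => Fin.elim0 i
    exact hxΩ (hxy ▸ hy₀)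
  · have hΩ₂ne : Ω₂.Nonempty := h₁ne.mono hsub
    have hbdd₁ : Bornology.IsBounded Ω₁ := hbdd₂.subset hsub
    have hS₁ : (envSet h₀ lam₀ Ω₁ x).Nonempty := envSet_nonempty hd hlam₀ hbdd₁
    set r := h₀ / lam₀ with hrdef
    have hrpos : 0 < r := div_pos hh₀ hlam₀
    have hlr : lam₀ * r = h₀ := by rw [hrdef]; field_simp
    have hx0' : env h₀ lam₀ Ω₁ x = 0 := hx0
    have hge : r ≤ infDist x Ω₁ := by
      have h1 := env_ge (h₀ := h₀) hlam₀ h₁ne hS₁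
      rw [hx0'] at h1
      nlinarith
    have hpos₁ : 0 < infDist x Ω₁ := lt_of_lt_of_le hrpos hge
    have hle : infDist x Ω₁ ≤ r := by
      have hmem := mem_envSet_of_pos (h₀ := h₀) hlam₀ hconv₁ h₁ne hpos₁
      have h1 := csInf_le (envSet_bddBelow h₁ne) hmem
      rw [← env_eq, hx0'] at h1
      nlinarith
    have h2le : infDist x Ω₂ ≤ r :=
      le_trans (infDist_le_infDist_of_subset hsub h₁ne) hle
    have hcrit : ∀ z : EuclideanSpace ℝ (Fin d), infDist z Ω₂ = r →
        z ∈ {x | env h₀ lam₀ Ω₂ x = 0} \ Ω₂ := by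
      intro z hz
      have hzpos : 0 < infDist z Ω₂ := hz ▸ hrpos
      constructor
      · show env h₀ lam₀ Ω₂ z = 0
        have hS₂ : (envSet h₀ lam₀ Ω₂ z).Nonempty := envSet_nonempty hd hlam₀ hbdd₂
        have hub := csInf_le (envSet_bddBelow hΩ₂ne)
          (mem_envSet_of_pos (h₀ := h₀) hlam₀ hconv₂ hΩ₂ne hzpos)
        have hlb := env_ge (h₀ := h₀) hlam₀ hΩ₂ne hS₂
        rw [← env_eq] at hub
        rw [hz] at hub hlb
        nlinarith
      · intro hzΩ
        have h0 := infDist_zero_of_mem hzΩ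
        rw [hz] at h0; exact absurd h0 (ne_of_gt hrpos)
    obtain ⟨R, hR⟩ := hbdd₂.subset_closedBall 0
    obtain ⟨y₂, hy₂⟩ := hΩ₂ne
    have hRnn : 0 ≤ R := le_trans (norm_nonneg y₂) (by simpa [dist_zero_right] using hR hy₂)
    set e : EuclideanSpace ℝ (Fin d) := EuclideanSpace.single (⟨0, hd⟩ : Fin d) (1 : ℝ) with hedef
    have hne1 : ‖e‖ = 1 := by rw [hedef, EuclideanSpace.norm_single]; simp
    set T := r + ‖x‖ + R + 1 with hTdef
    have hT0 : (0:ℝ) ≤ T := by positivity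
    have hfar : ∀ s : ℝ, |s| = T → r + 1 ≤ infDist (x + s • e) Ω₂ := by
      intro s hs
      by_contra hc
      push_neg at hc
      obtain ⟨y, hy, hlt⟩ := (infDist_lt_iff ⟨y₂, hy₂⟩).mp hc
      have hyR : ‖y‖ ≤ R := by simpa [dist_zero_right] using hR hy
      have h1 : ‖s • e‖ = T := by rw [norm_smul, hne1, Real.norm_eq_abs, hs]; ring
      have h2 : ‖s • e‖ ≤ ‖x + s • e - y‖ + ‖x - y‖ := by
        calc ‖s • e‖ = ‖(x + s • e - y) - (x - y)‖ := by congr 1; abel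
        _ ≤ ‖x + s • e - y‖ + ‖x - y‖ := norm_sub_le _ _
      have h3 : ‖x - y‖ ≤ ‖x‖ + ‖y‖ := norm_sub_le x y
      rw [dist_eq_norm] at hlt
      nlinarith [norm_nonneg (x + s • e - y)]
    -- IVT in direction +e
    have hmap1 : Continuous fun t : ℝ => x + t • e := continuous_const.add (continuous_id.smul continuous_const)
    have hmap2 : Continuous fun t : ℝ => x - t • e := continuous_const.sub (continuous_id.smul continuous_const)
    have hfc : Continuous fun t : ℝ => infDist (x + t • e) Ω₂ := by
      have h := Continuous.comp (continuous_infDist_pt Ω₂) hmap1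
      exact h
    have hgc : Continuous fun t : ℝ => infDist (x - t • e) Ω₂ := by
      have h := Continuous.comp (continuous_infDist_pt Ω₂) hmap2
      exact h
    have hIVTf := intermediate_value_Icc hT0 hfc.continuousOn
    have hIVTg := intermediate_value_Icc hT0 hgc.continuousOn
    have hf0 : infDist (x + (0:ℝ) • e) Ω₂ ≤ r := by simpa using h2le
    have hg0 : infDist (x - (0:ℝ) • e) Ω₂ ≤ r := by simpa using h2le
    have hfT : r ≤ infDist (x + T • e) Ω₂ := by
      have := hfar T (abs_of_nonneg hT0); linarith
    have hgT : r ≤ infDist (x - T • e) Ω₂ := by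
      have h1 := hfar (-T) (by rw [abs_neg, abs_of_nonneg hT0])
      have h2 : x + (-T) • e = x - T • e := by rw [neg_smul, sub_eq_add_neg]
      rw [h2] at h1; linarith
    obtain ⟨tp, htpI, htp⟩ := hIVTf ⟨hf0, hfT⟩
    obtain ⟨tm, htmI, htm⟩ := hIVTg ⟨hg0, hgT⟩
    have hmemp := hcrit _ htp
    have hmemm := hcrit _ htm
    have htp0 : 0 ≤ tp := htpI.1
    have htm0 : 0 ≤ tm := htmI.1
    by_cases hs0 : tp + tm = 0
    · have htpz : tp = 0 := by linarith
      have hxx : x = x + tp • e := by rw [htpz]; simp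
      exact subset_convexHull ℝ _ (hxx ▸ hmemp)
    · have hspos : 0 < tp + tm := lt_of_le_of_ne (by linarith) (Ne.symm hs0)
      set a := tm / (tp + tm) with hadef
      set b := tp / (tp + tm) with hbdef
      have ha : 0 ≤ a := div_nonneg htm0 hspos.le
      have hb : 0 ≤ b := div_nonneg htp0 hspos.le
      have hab : a + b = 1 := by rw [hadef, hbdef, ← add_div]; field_simp; ring
      have hcomb := (convex_convexHull ℝ ({x | env h₀ lam₀ Ω₂ x = 0} \ Ω₂))
        (subset_convexHull ℝ _ hmemp) (subset_convexHull ℝ _ hmemm) ha hb hab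
      have h1 : a * tp - b * tm = 0 := by rw [hadef, hbdef]; field_simp; ring
      have hxeq : x = a • (x + tp • e) + b • (x - tm • e) := by
        have hexp : a • (x + tp • e) + b • (x - tm • e)
            = (a + b) • x + (a * tp - b * tm) • e := by module
        rw [hexp, hab, h1, one_smul, zero_smul, add_zero]
      rw [hxeq]; exact hcomb
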